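/- Let m > 0 and let f be a non-constant solution of f''' + ((m+1)/2) f f'' - m (f')² = 0 on an interval I. If t₀ ∈ I and f''(t₀) ≥ 0, then f''(t) > 0 for all t ∈ I with t > t₀. -/

import Mathlib

open Real Set Filter Topology
set_option maxHeartbeats 800000

lemma gronwall_fwd (E : ℝ → ℝ) (a b L : ℝ)
    (hE : ContinuousOn E (Icc a b))
    (hd : ∀ u ∈ Ioo a b, ∃ d, HasDerivAt E d u ∧ |d| ≤ L * E u)
    (hpos : ∀ u ∈ Icc a b, 0 ≤ E u)
    (ha : E a = 0) : ∀ u ∈ Icc a b, E u = 0 := by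
  set G := fun u => E u * Real.exp (-L * u) with hGdef
  have hGc : ContinuousOn G (Icc a b) :=
    hE.mul (Continuous.continuousOn (by continuity))
  have key : ∀ x ∈ Ioo a b, ∃ d, HasDerivAt G d x ∧ d ≤ 0 := by
    intro x hx
    obtain ⟨d, hdx, hbd⟩ := hd x hx
    have hexp : HasDerivAt (fun u => Real.exp (-L * u)) (Real.exp (-L * x) * (-L)) x := by
      simpa using ((hasDerivAt_id x).const_mul (-L)).exp
    refine ⟨_, hdx.mul hexp, ?_⟩
    have h1 : d ≤ L * E x := le_trans (le_abs_self _) hbd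
    have h2 : (0:ℝ) < Real.exp (-L * x) := Real.exp_pos _
    nlinarith
  have hanti : AntitoneOn G (Icc a b) := by
    apply antitoneOn_of_deriv_nonpos (convex_Icc a b) hGc
    · intro x hx
      rw [interior_Icc] at hx
      obtain ⟨d, hdx, _⟩ := key x hx
      exact hdx.differentiableAt.differentiableWithinAt
    · intro x hx
      rw [interior_Icc] at hx
      obtain ⟨d, hdx, hd0⟩ := key x hx
      rw [hdx.deriv]; exact hd0
  intro u hu
  have h1 : G u ≤ G a := hanti (left_mem_Icc.mpr (hu.1.trans hu.2)) hu hu.1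
  have h2 : G a = 0 := by simp [hGdef, ha]
  have h3 : 0 ≤ G u := mul_nonneg (hpos u hu) (Real.exp_pos _).le
  have h4 : G u = 0 := le_antisymm (h2 ▸ h1) h3
  have h5 : (0:ℝ) < Real.exp (-L * u) := Real.exp_pos _
  have := mul_eq_zero.mp h4
  rcases this with h | h
  · exact h
  · exact absurd h h5.ne'

lemma gronwall_bwd (E : ℝ → ℝ) (a b L : ℝ)
    (hE : ContinuousOn E (Icc a b))
    (hd : ∀ u ∈ Ioo a b, ∃ d, HasDerivAt E d u ∧ |d| ≤ L * E u)
    (hpos : ∀ u ∈ Icc a b, 0 ≤ E u)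
    (hb : E b = 0) : ∀ u ∈ Icc a b, E u = 0 := by
  set G := fun u => E u * Real.exp (L * u) with hGdef
  have hGc : ContinuousOn G (Icc a b) :=
    hE.mul (Continuous.continuousOn (by continuity))
  have key : ∀ x ∈ Ioo a b, ∃ d, HasDerivAt G d x ∧ 0 ≤ d := by
    intro x hx
    obtain ⟨d, hdx, hbd⟩ := hd x hx
    have hexp : HasDerivAt (fun u => Real.exp (L * u)) (Real.exp (L * x) * L) x := by
      simpa using ((hasDerivAt_id x).const_mul L).exp
    refine ⟨_, hdx.mul hexp, ?_⟩
    have h1 : -(L * E x) ≤ d := neg_le_of_abs_le hbd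
    have h2 : (0:ℝ) < Real.exp (L * x) := Real.exp_pos _
    nlinarith
  have hmono : MonotoneOn G (Icc a b) := by
    apply monotoneOn_of_deriv_nonneg (convex_Icc a b) hGc
    · intro x hx
      rw [interior_Icc] at hx
      obtain ⟨d, hdx, _⟩ := key x hx
      exact hdx.differentiableAt.differentiableWithinAt
    · intro x hx
      rw [interior_Icc] at hx
      obtain ⟨d, hdx, hd0⟩ := key x hx
      rw [hdx.deriv]; exact hd0
  intro u hu
  have h1 : G u ≤ G b := hmono hu (right_mem_Icc.mpr (hu.1.trans hu.2)) hu.2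
  have h2 : G b = 0 := by simp [hGdef, hb]
  have h3 : 0 ≤ G u := mul_nonneg (hpos u hu) (Real.exp_pos _).le
  have h4 : G u = 0 := le_antisymm (h2 ▸ h1) h3
  rcases mul_eq_zero.mp h4 with h | h
  · exact h
  · exact absurd h (Real.exp_pos _).ne'


lemma nonneg_aux (m : ℝ) (hm : 0 < m) (I : Set ℝ) (hI : I.OrdConnected)
    (f f' f'' f''' : ℝ → ℝ)
    (hf : ∀ t ∈ I, HasDerivWithinAt f (f' t) I t)
    (hf' : ∀ t ∈ I, HasDerivWithinAt f' (f'' t) I t)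
    (hf'' : ∀ t ∈ I, HasDerivWithinAt f'' (f''' t) I t)
    (hode : ∀ t ∈ I,
      f''' t + (m + 1) / 2 * f t * f'' t - m * (f' t) ^ 2 = 0)
    (t₀ : ℝ) (ht₀ : t₀ ∈ I) (h : 0 ≤ f'' t₀) :
    ∀ t ∈ I, t₀ ≤ t → 0 ≤ f'' t := by
  intro s hs hts
  by_contra hneg
  push_neg at hneg
  have hJ : Icc t₀ s ⊆ I := hI.out ht₀ hs
  -- continuity
  have hfc : ContinuousOn f I := fun u hu => (hf u hu).continuousWithinAt
  have hf''c : ContinuousOn f'' I := fun u hu => (hf'' u hu).continuousWithinAt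
  -- bound on f
  obtain ⟨C, hC⟩ := isCompact_Icc.exists_bound_of_continuousOn (hfc.mono hJ)
  set L := (m + 1) / 2 * C + 1 with hLdef
  have hC0 : 0 ≤ C := le_trans (norm_nonneg _) (hC t₀ (left_mem_Icc.mpr hts))
  have hLp : ∀ u ∈ Icc t₀ s, (m + 1) / 2 * f u + L ≥ 0 := by
    intro u hu
    have := hC u hu
    rw [Real.norm_eq_abs, abs_le] at this
    nlinarith
  -- the set A
  set A := {u | u ∈ Icc t₀ s ∧ 0 ≤ f'' u} with hAdef
  have hAsub : A ⊆ Icc t₀ s := fun u hu => hu.1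
  have hAclosed : IsClosed A := by
    have : A = Icc t₀ s ∩ f'' ⁻¹' (Ici 0) := rfl
    rw [this]
    exact ContinuousOn.preimage_isClosed_of_isClosed (hf''c.mono hJ) isClosed_Icc isClosed_Ici
  have hAcomp : IsCompact A := isCompact_Icc.of_isClosed_subset hAclosed hAsub
  have hAne : A.Nonempty := ⟨t₀, left_mem_Icc.mpr hts, h⟩
  set r := sSup A with hrdef
  have hrA : r ∈ A := hAcomp.sSup_mem hAne
  have hrs : r ≤ s := hrA.1.2
  have hr0 : 0 ≤ f'' r := hrA.2
  have htr : t₀ ≤ r := hrA.1.1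
  have hrs' : r < s := lt_of_le_of_ne hrs (fun he => by rw [he] at hr0; linarith)
  have hbdd : BddAbove A := ⟨s, fun x hx => hx.1.2⟩
  have hnegon : ∀ u ∈ Ioc r s, f'' u ≤ 0 := by
    intro u hu
    by_contra hc
    push_neg at hc
    have huA : u ∈ A := ⟨⟨htr.trans hu.1.le, hu.2⟩, hc.le⟩
    exact absurd (le_csSup hbdd huA) (not_le.mpr hu.1)
  -- monotone w on Icc r s
  have hJ' : Icc r s ⊆ I := fun u hu => hJ ⟨htr.trans hu.1, hu.2⟩
  set w := fun u => f'' u * Real.exp (-L * u) with hwdef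
  have hwc : ContinuousOn w (Icc r s) :=
    ((hf''c.mono hJ')).mul (Continuous.continuousOn (by continuity))
  have key : ∀ x ∈ Ioo r s, ∃ d, HasDerivAt w d x ∧ 0 ≤ d := by
    intro x hx
    have hxI : x ∈ I := hJ' (Ioo_subset_Icc_self hx)
    have hnbd : I ∈ 𝓝 x := mem_nhds_iff.mpr ⟨Ioo r s, Ioo_subset_Icc_self.trans hJ', isOpen_Ioo, hx⟩
    have hD : HasDerivAt f'' (f''' x) x := (hf'' x hxI).hasDerivAt hnbd
    have hexp : HasDerivAt (fun u => Real.exp (-L * u)) (Real.exp (-L * x) * (-L)) x := by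
      simpa using ((hasDerivAt_id x).const_mul (-L)).exp
    refine ⟨_, hD.mul hexp, ?_⟩
    have hodex := hode x hxI
    have hle : f'' x ≤ 0 := hnegon x ⟨hx.1, hx.2.le⟩
    have hL' : (m + 1) / 2 * f x + L ≥ 0 := hLp x ⟨htr.trans hx.1.le, hx.2.le⟩
    have he : (0:ℝ) < Real.exp (-L * x) := Real.exp_pos _
    have hf3 : f''' x = m * (f' x) ^ 2 - (m + 1) / 2 * f x * f'' x := by linarith
    have expand : f''' x * Real.exp (-L * x) + f'' x * (Real.exp (-L * x) * (-L))
        = m * (f' x) ^ 2 * Real.exp (-L * x)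
          + (((m + 1) / 2 * f x + L) * (-(f'' x))) * Real.exp (-L * x) := by
      rw [hf3]; ring
    rw [expand]
    have h1 : 0 ≤ m * (f' x) ^ 2 * Real.exp (-L * x) :=
      mul_nonneg (mul_nonneg hm.le (sq_nonneg _)) he.le
    have h2 : 0 ≤ (((m + 1) / 2 * f x + L) * (-(f'' x))) * Real.exp (-L * x) :=
      mul_nonneg (mul_nonneg hL' (neg_nonneg.mpr hle)) he.le
    linarith
  have hmono : MonotoneOn w (Icc r s) := by
    apply monotoneOn_of_deriv_nonneg (convex_Icc r s) hwc
    · intro x hx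
      rw [interior_Icc] at hx
      obtain ⟨d, hdx, _⟩ := key x hx
      exact hdx.differentiableAt.differentiableWithinAt
    · intro x hx
      rw [interior_Icc] at hx
      obtain ⟨d, hdx, hd0⟩ := key x hx
      rw [hdx.deriv]; exact hd0
  have h1 : w r ≤ w s := hmono (left_mem_Icc.mpr hrs) (right_mem_Icc.mpr hrs) hrs
  have h2 : 0 ≤ w r := mul_nonneg hr0 (Real.exp_pos _).le
  have h3 : w s < 0 := mul_neg_of_neg_of_pos hneg (Real.exp_pos _)
  linarith

lemma const_aux (m : ℝ) (hm : 0 < m) (I : Set ℝ) (hI : I.OrdConnected)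
    (f f' f'' f''' : ℝ → ℝ)
    (hf : ∀ t ∈ I, HasDerivWithinAt f (f' t) I t)
    (hf' : ∀ t ∈ I, HasDerivWithinAt f' (f'' t) I t)
    (hf'' : ∀ t ∈ I, HasDerivWithinAt f'' (f''' t) I t)
    (hode : ∀ t ∈ I,
      f''' t + (m + 1) / 2 * f t * f'' t - m * (f' t) ^ 2 = 0)
    (t₁ : ℝ) (ht₁ : t₁ ∈ I) (h1 : f' t₁ = 0) (h2 : f'' t₁ = 0) :
    ∀ x ∈ I, f x = f t₁ := by
  have hfc : ContinuousOn f I := fun u hu => (hf u hu).continuousWithinAt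
  have hf'c : ContinuousOn f' I := fun u hu => (hf' u hu).continuousWithinAt
  have hf''c : ContinuousOn f'' I := fun u hu => (hf'' u hu).continuousWithinAt
  set c := f t₁ with hcdef
  set E := fun u => (f u - c) ^ 2 + (f' u) ^ 2 + (f'' u) ^ 2 with hEdef
  have hEcont : ContinuousOn E I :=
    (((hfc.sub continuousOn_const).pow 2).add (hf'c.pow 2)).add (hf''c.pow 2)
  have hEpos : ∀ u, 0 ≤ E u := fun u => by positivity
  have hEt₁ : E t₁ = 0 := by simp [hEdef, hcdef, h1, h2]
  have hEd : ∀ a b : ℝ, Icc a b ⊆ I →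
      ∃ L, ∀ u ∈ Ioo a b, ∃ d, HasDerivAt E d u ∧ |d| ≤ L * E u := by
    intro a b hJ
    obtain ⟨C1, hC1⟩ := isCompact_Icc.exists_bound_of_continuousOn (hfc.mono hJ)
    obtain ⟨C2, hC2⟩ := isCompact_Icc.exists_bound_of_continuousOn (hf'c.mono hJ)
    obtain ⟨C3, hC3⟩ := isCompact_Icc.exists_bound_of_continuousOn (hf''c.mono hJ)
    set M := max (max C1 (max C2 C3)) 0 with hMdef
    have hM0 : 0 ≤ M := le_max_right _ _
    refine ⟨2 + 2 * m * M + (m + 1) * M, ?_⟩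
    intro u hu
    have huJ : u ∈ Icc a b := Ioo_subset_Icc_self hu
    have huI : u ∈ I := hJ huJ
    have hnbd : I ∈ 𝓝 u := mem_nhds_iff.mpr ⟨Ioo a b, Ioo_subset_Icc_self.trans hJ, isOpen_Ioo, hu⟩
    have hDf : HasDerivAt f (f' u) u := (hf u huI).hasDerivAt hnbd
    have hDf' : HasDerivAt f' (f'' u) u := (hf' u huI).hasDerivAt hnbd
    have hDf'' : HasDerivAt f'' (f''' u) u := (hf'' u huI).hasDerivAt hnbd
    have hD1 : HasDerivAt (fun v => (f v - c) ^ 2) (2 * (f u - c) * f' u) u := by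
      have := (hDf.sub_const c).fun_pow 2
      simpa using this
    have hD2 : HasDerivAt (fun v => (f' v) ^ 2) (2 * f' u * f'' u) u := by
      have := hDf'.fun_pow 2
      simpa using this
    have hD3 : HasDerivAt (fun v => (f'' v) ^ 2) (2 * f'' u * f''' u) u := by
      have := hDf''.fun_pow 2
      simpa using this
    refine ⟨_, (hD1.add hD2).add hD3, ?_⟩
    -- bounds
    have hbf : |f u| ≤ M := le_trans (hC1 u huJ) (le_max_of_le_left (le_max_left _ _))
    have hbf' : |f' u| ≤ M :=
      le_trans (hC2 u huJ) (le_max_of_le_left (le_max_of_le_right (le_max_left _ _)))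
    have hbf'' : |f'' u| ≤ M :=
      le_trans (hC3 u huJ) (le_max_of_le_left (le_max_of_le_right (le_max_right _ _)))
    rw [abs_le] at hbf hbf' hbf''
    have h3 : f''' u = m * (f' u) ^ 2 - (m + 1) / 2 * f u * f'' u := by
      have := hode u huI
      linarith
    have hEu : E u = (f u - c) ^ 2 + (f' u) ^ 2 + (f'' u) ^ 2 := rfl
    rw [h3, abs_le, hEu]
    have key1 : 0 ≤ m * ((M - f'' u) * (f' u)^2) :=
      mul_nonneg hm.le (mul_nonneg (sub_nonneg.mpr hbf''.2) (sq_nonneg _))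
    have key2 : 0 ≤ m * ((M + f'' u) * (f' u)^2) :=
      mul_nonneg hm.le (mul_nonneg (by linarith [hbf''.1]) (sq_nonneg _))
    have key3 : 0 ≤ (M - f u) * (f'' u)^2 :=
      mul_nonneg (sub_nonneg.mpr hbf.2) (sq_nonneg _)
    have key4 : 0 ≤ (M + f u) * (f'' u)^2 :=
      mul_nonneg (by linarith [hbf.1]) (sq_nonneg _)
    have key5 : 0 ≤ m * ((M - f u) * (f'' u)^2) := mul_nonneg hm.le key3
    have key6 : 0 ≤ m * ((M + f u) * (f'' u)^2) := mul_nonneg hm.le key4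
    constructor
    · linarith [sq_nonneg (f u - c + f' u), sq_nonneg (f' u + f'' u), key1, key2, key3, key4, key5, key6,
        mul_nonneg (mul_nonneg hm.le hM0) (sq_nonneg (f u - c)),
        mul_nonneg (mul_nonneg hm.le hM0) (sq_nonneg (f'' u)),
        mul_nonneg hM0 (sq_nonneg (f u - c)),
        mul_nonneg hM0 (sq_nonneg (f' u)),
        mul_nonneg (mul_nonneg hm.le hM0) (sq_nonneg (f' u)),
        mul_nonneg hM0 (sq_nonneg (f'' u)), sq_nonneg (f u - c), sq_nonneg (f' u), sq_nonneg (f'' u)]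
    · linarith [sq_nonneg (f u - c - f' u), sq_nonneg (f' u - f'' u), key1, key2, key3, key4, key5, key6,
        mul_nonneg (mul_nonneg hm.le hM0) (sq_nonneg (f u - c)),
        mul_nonneg (mul_nonneg hm.le hM0) (sq_nonneg (f'' u)),
        mul_nonneg hM0 (sq_nonneg (f u - c)),
        mul_nonneg hM0 (sq_nonneg (f' u)),
        mul_nonneg (mul_nonneg hm.le hM0) (sq_nonneg (f' u)),
        mul_nonneg hM0 (sq_nonneg (f'' u)), sq_nonneg (f u - c), sq_nonneg (f' u), sq_nonneg (f'' u)]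
  intro x hx
  rcases le_total x t₁ with hxt | hxt
  · have hJ : Icc x t₁ ⊆ I := hI.out hx ht₁
    obtain ⟨L, hL⟩ := hEd x t₁ hJ
    have := gronwall_bwd E x t₁ L (hEcont.mono hJ) hL (fun u _ => hEpos u) hEt₁ x
      (left_mem_Icc.mpr hxt)
    have hx0 : (f x - c) ^ 2 + (f' x) ^ 2 + (f'' x) ^ 2 = 0 := this
    nlinarith [sq_nonneg (f x - c), sq_nonneg (f' x), sq_nonneg (f'' x)]
  · have hJ : Icc t₁ x ⊆ I := hI.out ht₁ hx
    obtain ⟨L, hL⟩ := hEd t₁ x hJ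
    have := gronwall_fwd E t₁ x L (hEcont.mono hJ) hL (fun u _ => hEpos u) hEt₁ x
      (right_mem_Icc.mpr hxt)
    have hx0 : (f x - c) ^ 2 + (f' x) ^ 2 + (f'' x) ^ 2 = 0 := this
    nlinarith [sq_nonneg (f x - c), sq_nonneg (f' x), sq_nonneg (f'' x)]
theorem stmt3 (m : ℝ) (hm : 0 < m) (I : Set ℝ) (hI : I.OrdConnected)
    (f f' f'' f''' : ℝ → ℝ)
    (hf : ∀ t ∈ I, HasDerivWithinAt f (f' t) I t)
    (hf' : ∀ t ∈ I, HasDerivWithinAt f' (f'' t) I t)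
    (hf'' : ∀ t ∈ I, HasDerivWithinAt f'' (f''' t) I t)
    (hode : ∀ t ∈ I,
      f''' t + (m + 1) / 2 * f t * f'' t - m * (f' t) ^ 2 = 0)
    (hnc : ¬ ∀ x ∈ I, ∀ y ∈ I, f x = f y)
    (t₀ : ℝ) (ht₀ : t₀ ∈ I) (h : 0 ≤ f'' t₀) :
    ∀ t ∈ I, t₀ < t → 0 < f'' t := by
  have hnn := nonneg_aux m hm I hI f f' f'' f''' hf hf' hf'' hode t₀ ht₀ h
  intro t ht htt
  rcases lt_or_eq_of_le (hnn t ht htt.le) with hpos | heq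
  · exact hpos
  -- f'' t = 0 : derive a contradiction
  exfalso
  have ht0 : f'' t = 0 := heq.symm
  have hJ : Icc t₀ t ⊆ I := hI.out ht₀ ht
  have hfc : ContinuousOn f I := fun u hu => (hf u hu).continuousWithinAt
  have hf''c : ContinuousOn f'' I := fun u hu => (hf'' u hu).continuousWithinAt
  -- Step 1: f'' ≡ 0 on [t₀, t]
  obtain ⟨C, hC⟩ := isCompact_Icc.exists_bound_of_continuousOn (hfc.mono hJ)
  set L := (m + 1) / 2 * C + 1 with hLdef
  have hC0 : 0 ≤ C := le_trans (norm_nonneg _) (hC t₀ (left_mem_Icc.mpr htt.le))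
  set w := fun u => f'' u * Real.exp (L * u) with hwdef
  have hwc : ContinuousOn w (Icc t₀ t) :=
    (hf''c.mono hJ).mul
      ((Real.continuous_exp.comp (continuous_const.mul continuous_id)).continuousOn)
  have key : ∀ x ∈ Ioo t₀ t, ∃ d, HasDerivAt w d x ∧ 0 ≤ d := by
    intro x hx
    have hxI : x ∈ I := hJ (Ioo_subset_Icc_self hx)
    have hnbd : I ∈ 𝓝 x := mem_nhds_iff.mpr ⟨Ioo t₀ t, Ioo_subset_Icc_self.trans hJ, isOpen_Ioo, hx⟩
    have hD : HasDerivAt f'' (f''' x) x := (hf'' x hxI).hasDerivAt hnbd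
    have hexp : HasDerivAt (fun u => Real.exp (L * u)) (Real.exp (L * x) * L) x := by
      simpa using ((hasDerivAt_id x).const_mul L).exp
    refine ⟨_, hD.mul hexp, ?_⟩
    have hodex := hode x hxI
    have hge : 0 ≤ f'' x := hnn x hxI hx.1.le
    have hbx := hC x (Ioo_subset_Icc_self hx)
    rw [Real.norm_eq_abs, abs_le] at hbx
    have hL' : 0 ≤ L - (m + 1) / 2 * f x := by nlinarith [hbx.2]
    have he : (0:ℝ) < Real.exp (L * x) := Real.exp_pos _
    have hf3 : f''' x = m * (f' x) ^ 2 - (m + 1) / 2 * f x * f'' x := by linarith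
    have expand : f''' x * Real.exp (L * x) + f'' x * (Real.exp (L * x) * L)
        = m * (f' x) ^ 2 * Real.exp (L * x)
          + ((L - (m + 1) / 2 * f x) * f'' x) * Real.exp (L * x) := by
      rw [hf3]; ring
    rw [expand]
    have h1 : 0 ≤ m * (f' x) ^ 2 * Real.exp (L * x) :=
      mul_nonneg (mul_nonneg hm.le (sq_nonneg _)) he.le
    have h2 : 0 ≤ ((L - (m + 1) / 2 * f x) * f'' x) * Real.exp (L * x) :=
      mul_nonneg (mul_nonneg hL' hge) he.le
    linarith
  have hmono : MonotoneOn w (Icc t₀ t) := by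
    apply monotoneOn_of_deriv_nonneg (convex_Icc t₀ t) hwc
    · intro x hx
      rw [interior_Icc] at hx
      obtain ⟨d, hdx, _⟩ := key x hx
      exact hdx.differentiableAt.differentiableWithinAt
    · intro x hx
      rw [interior_Icc] at hx
      obtain ⟨d, hdx, hd0⟩ := key x hx
      rw [hdx.deriv]; exact hd0
  have hzero : ∀ u ∈ Icc t₀ t, f'' u = 0 := by
    intro u hu
    have h1 : w u ≤ w t := hmono hu (right_mem_Icc.mpr htt.le) hu.2
    have h2 : w t = 0 := by simp [hwdef, ht0]
    have h3 : 0 ≤ w u := mul_nonneg (hnn u (hJ hu) hu.1) (Real.exp_pos _).le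
    have h4 : w u = 0 := le_antisymm (h2 ▸ h1) h3
    rcases mul_eq_zero.mp h4 with h5 | h5
    · exact h5
    · exact absurd h5 (Real.exp_pos _).ne'
  -- Step 2: at the midpoint t₁, f' t₁ = 0 and f'' t₁ = 0
  set t₁ := (t₀ + t) / 2 with ht₁def
  have ht₁mem : t₁ ∈ Ioo t₀ t := ⟨by linarith, by linarith⟩
  have ht₁I : t₁ ∈ I := hJ (Ioo_subset_Icc_self ht₁mem)
  have ht₁'' : f'' t₁ = 0 := hzero t₁ (Ioo_subset_Icc_self ht₁mem)
  have hnbd : I ∈ 𝓝 t₁ :=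
    mem_nhds_iff.mpr ⟨Ioo t₀ t, Ioo_subset_Icc_self.trans hJ, isOpen_Ioo, ht₁mem⟩
  have hD : HasDerivAt f'' (f''' t₁) t₁ := (hf'' t₁ ht₁I).hasDerivAt hnbd
  have hD0 : HasDerivAt f'' 0 t₁ := by
    have hev : f'' =ᶠ[𝓝 t₁] (fun _ => (0:ℝ)) := by
      filter_upwards [isOpen_Ioo.mem_nhds ht₁mem] with u hu
      exact hzero u (Ioo_subset_Icc_self hu)
    exact (hasDerivAt_const t₁ (0:ℝ)).congr_of_eventuallyEq hev
  have h3' : f''' t₁ = 0 := hD.unique hD0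
  have ht₁' : f' t₁ = 0 := by
    have := hode t₁ ht₁I
    rw [h3', ht₁''] at this
    have hmul : m * (f' t₁) ^ 2 = 0 := by linarith
    rcases mul_eq_zero.mp hmul with h5 | h5
    · exact absurd h5 hm.ne'
    · exact pow_eq_zero_iff two_ne_zero |>.mp h5
  -- Step 3: f is constant on I, contradiction
  have hconst := const_aux m hm I hI f f' f'' f''' hf hf' hf'' hode t₁ ht₁I ht₁' ht₁''
  exact hnc (fun x hx y hy => by rw [hconst x hx, hconst y hy])
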